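/- In any semiring, backward values of an acyclic weighted graph satisfy the backward recursion: if β(q) is defined as the sum over all paths π starting at q of (inner weight of π) ⊗ ρ(endpoint of π), then β(q) = ρ(q) ⊕ ⊕_{edges (q, w, q')} w ⊗ β(q'), where the sum ranges over all outgoing edges of q. -/
import Mathlib


/-- `IsPathFrom E q es`: `es` is a (possibly empty) list of consecutive edges of `E`
starting at `q`.  An edge `(p, w, p')` goes from `p` to `p'` with weight `w`. -/
def IsPathFrom {Q K : Type*} (E : Finset (Q × K × Q)) : Q → List (Q × K × Q) → Prop
  | _, [] => True
  | q, e :: es => e ∈ E ∧ e.1 = q ∧ IsPathFrom E e.2.2 es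

/-- The final state of a path starting at `q`. -/
def pathEnd {Q K : Type*} (q : Q) : List (Q × K × Q) → Q
  | [] => q
  | e :: es => pathEnd e.2.2 es

/-- The inner weight of a path: the `⊗`-product of its edge weights (`1` if empty). -/
def innerWeight {Q K : Type*} [Semiring K] (es : List (Q × K × Q)) : K :=
  (es.map fun e => e.2.1).prod

/-- Backward recursion: if `β(q)` is the sum over all paths `π` starting at `q` of
`w_I(π) ⊗ ρ(end(π))` (where `P q` is the finite set of all paths from `q`, finite by
acyclicity), then `β(q) = ρ(q) ⊕ ⊕_{(q,w,q') ∈ E} w ⊗ β(q')`. -/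
theorem stmt_8 {Q K : Type*} [DecidableEq Q] [Semiring K]
    (E : Finset (Q × K × Q))
    (hacyc : ∀ q, ¬ Relation.TransGen (fun a b => ∃ w, (a, w, b) ∈ E) q q)
    (P : Q → Finset (List (Q × K × Q)))
    (hP : ∀ q es, es ∈ P q ↔ IsPathFrom E q es)
    (ρ β : Q → K)
    (hβ : ∀ q, β q = ∑ es ∈ P q, innerWeight es * ρ (pathEnd q es)) :
    ∀ q, β q = ρ q + ∑ e ∈ E.filter (fun e => e.1 = q), e.2.1 * β e.2.2 := by
  classical
  intro q
  rw [hβ q]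
  have hmem : ([] : List (Q × K × Q)) ∈ P q := (hP q []).2 trivial
  rw [← Finset.add_sum_erase _ _ hmem]
  congr 1
  · simp [innerWeight, pathEnd]
  · have hset : (P q).erase [] =
        (E.filter (fun e => e.1 = q)).biUnion (fun e => (P e.2.2).image (e :: ·)) := by
      ext es
      simp only [Finset.mem_erase, Finset.mem_biUnion, Finset.mem_filter, Finset.mem_image, hP]
      constructor
      · rintro ⟨hne, hpath⟩
        cases es with
        | nil => exact absurd rfl hne
        | cons e es => exact ⟨e, ⟨hpath.1, hpath.2.1⟩, es, hpath.2.2, rfl⟩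
      · rintro ⟨e, ⟨heE, heq⟩, es', hes', rfl⟩
        exact ⟨List.cons_ne_nil _ _, heE, heq, hes'⟩
    rw [hset, Finset.sum_biUnion]
    · apply Finset.sum_congr rfl
      intro e _
      rw [Finset.sum_image (fun a _ b _ h => ((List.cons.injEq ..).mp h).2)]
      rw [hβ e.2.2, Finset.mul_sum]
      apply Finset.sum_congr rfl
      intro es _
      simp [innerWeight, pathEnd, mul_assoc]
    · intro a _ b _ hab
      simp only [Finset.disjoint_left, Finset.mem_image]
      rintro x ⟨u, _, rfl⟩ ⟨v, _, h⟩
      exact hab (((List.cons.injEq ..).mp h).1).symm
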